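/- Let L, m be positive integers, let γ ≥ 0 be a real number, and for each l ∈ {1,…,L} let G_l ∈ ℂ^{m × m} be a positive semidefinite Hermitian matrix. Define Q_0 = I_m and Q_l = Q_{l-1} + γ · G_l for l = 1,…,L, and set E_l = I_m + γ · Q_{l-1}⁻¹ G_l for l = 1,…,L. Then Q_L = E_1 · E_2 · ⋯ · E_L, i.e., I_m + γ · Σ_{l=1}^{L} G_l equals the ordered product E_1 E_2 ⋯ E_L. -/

import Mathlib

open Matrix BigOperators
open scoped ComplexOrder

lemma smul_psd {m : ℕ} (γ : ℝ) (hγ : 0 ≤ γ) {A : Matrix (Fin m) (Fin m) ℂ}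
    (hA : A.PosSemidef) : ((γ : ℂ) • A).PosSemidef := by
  rw [posSemidef_iff_dotProduct_mulVec]
  constructor
  · unfold Matrix.IsHermitian
    rw [conjTranspose_smul, hA.1.eq]
    norm_num
  · intro x
    rw [smul_mulVec, dotProduct_smul]
    have := hA.dotProduct_mulVec_nonneg x
    have : 0 ≤ (γ : ℂ) * (star x ⬝ᵥ A.mulVec x) := mul_nonneg (by exact_mod_cast hγ) this
    simpa using this

/-- The telescoping factorization (equation (15) in the paper):
`Q_L = I_m + γ Σ_{l=1}^L G_l` equals the ordered product `E_1 E_2 ⋯ E_L`, where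
`E_l = I_m + γ Q_{l-1}⁻¹ G_l`. -/
theorem stmt_3 (L m : ℕ) (hL : 0 < L) (hm : 0 < m) (γ : ℝ) (hγ : 0 ≤ γ)
    (G : Fin L → Matrix (Fin m) (Fin m) ℂ)
    (hG : ∀ l : Fin L, (G l).PosSemidef)
    (Q : ℕ → Matrix (Fin m) (Fin m) ℂ)
    (hQ0 : Q 0 = 1)
    (hQrec : ∀ l : Fin L, Q ((l : ℕ) + 1) = Q (l : ℕ) + (γ : ℂ) • G l)
    (E : Fin L → Matrix (Fin m) (Fin m) ℂ)
    (hE : ∀ l : Fin L, E l = 1 + (γ : ℂ) • ((Q (l : ℕ))⁻¹ * G l)) :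
    Q L = (List.ofFn fun l : Fin L => E l).prod ∧
      Q L = 1 + (γ : ℂ) • ∑ l : Fin L, G l := by
  -- Positive definiteness of Q n for n ≤ L
  have hPD : ∀ n, n ≤ L → (Q n).PosDef := by
    intro n
    induction n with
    | zero => intro _; rw [hQ0]; exact Matrix.PosDef.one
    | succ k ih =>
      intro hk
      have hkL : k < L := hk
      rw [hQrec ⟨k, hkL⟩]
      exact (ih (le_of_lt hkL)).add_posSemidef (smul_psd γ hγ (hG ⟨k, hkL⟩))
  -- Q n * E_n = Q (n+1)
  have hstep : ∀ l : Fin L, Q (l : ℕ) * E l = Q ((l : ℕ) + 1) := by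
    intro l
    have hinv : IsUnit (Q (l : ℕ)) := (hPD (l : ℕ) (le_of_lt l.2)).isUnit
    rw [hE l, mul_add, mul_one, Matrix.mul_smul, ← Matrix.mul_assoc,
      Matrix.mul_nonsing_inv _ (isUnit_iff_isUnit_det _ |>.mp hinv),
      Matrix.one_mul, hQrec l]
  -- First claim by induction
  have hprod : ∀ n, (hn : n ≤ L) →
      Q n = (List.ofFn fun l : Fin n => E (Fin.castLE hn l)).prod := by
    intro n
    induction n with
    | zero => intro _; simp [hQ0]
    | succ k ih =>
      intro hk
      have hkL : k < L := hk
      rw [List.ofFn_succ', List.prod_concat]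
      have h1 : (List.ofFn fun i : Fin k => E (Fin.castLE hk i.castSucc)).prod = Q k :=
        (ih (le_of_lt hkL)).symm
      rw [h1]
      exact (hstep ⟨k, hkL⟩).symm
  have hsum : ∀ n, (hn : n ≤ L) →
      Q n = 1 + (γ : ℂ) • ∑ l : Fin n, G (Fin.castLE hn l) := by
    intro n
    induction n with
    | zero => intro _; simp [hQ0]
    | succ k ih =>
      intro hk
      have hkL : k < L := hk
      rw [hQrec ⟨k, hkL⟩, ih (le_of_lt hkL), Fin.sum_univ_castSucc, smul_add, add_assoc]
      rfl
  constructor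
  · have := hprod L le_rfl
    simpa [Fin.castLE] using this
  · have := hsum L le_rfl
    simpa [Fin.castLE] using this
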